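/- The functions φ₀(R) = R(1 − R²/3)(1 + R²/3)^{−3/2} and θ₀(R) = (1 − 2R² + R⁴/9)(1 + R²/3)^{−3/2} satisfy φ₀''(R) + 5W(R)⁴ φ₀(R) = 0 and θ₀''(R) + 5W(R)⁴ θ₀(R) = 0 for all R > 0, and their Wronskian satisfies θ₀(R)φ₀'(R) − θ₀'(R)φ₀(R) = 1 for all R ≥ 0. Moreover φ₀(R) = −√3 + φ₀*(R) and θ₀(R) = R/√3 + θ₀*(R), where for every k ∈ ℕ₀ there are constants C_k with |∂_R^k φ₀*(R)| ≤ C_k ⟨R⟩^{−2−k} and |∂_R^k θ₀*(R)| ≤ C_k ⟨R⟩^{−1−k} for all R ≥ 0. -/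

import Mathlib

noncomputable section

open Real

/-- Japanese bracket `⟨x⟩ = (1+x²)^{1/2}`. -/
def jap (x : ℝ) : ℝ := Real.sqrt (1 + x ^ 2)

/-- The ground state `W(R) = (1+R²/3)^{-1/2}`. -/
def W (R : ℝ) : ℝ := (Real.sqrt (1 + R ^ 2 / 3))⁻¹

/-- The zero-energy resonance `φ₀(R) = R(1-R²/3)(1+R²/3)^{-3/2}`. -/
def phi0 (R : ℝ) : ℝ := R * (1 - R ^ 2 / 3) * (1 + R ^ 2 / 3) ^ (-(3 : ℝ) / 2)

/-- The second zero-energy solution `θ₀(R) = (1-2R²+R⁴/9)(1+R²/3)^{-3/2}`. -/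
def theta0 (R : ℝ) : ℝ := (1 - 2 * R ^ 2 + R ^ 4 / 9) * (1 + R ^ 2 / 3) ^ (-(3 : ℝ) / 2)

namespace ZEF

/-- `v R = √(3+R²)`. -/
def v (R : ℝ) : ℝ := Real.sqrt (3 + R ^ 2)

lemma v_pos (R : ℝ) : 0 < v R := Real.sqrt_pos.2 (by positivity)

lemma v_sq (R : ℝ) : v R ^ 2 = 3 + R ^ 2 := Real.sq_sqrt (by positivity)

lemma v_add_pos (R : ℝ) : 0 < v R + R := by nlinarith [v_pos R, v_sq R]

lemma v_hasDerivAt (R : ℝ) : HasDerivAt v (R / v R) R := by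
  have h : HasDerivAt (fun R : ℝ => 3 + R ^ 2) (2 * R) R := by
    have h0 := (hasDerivAt_pow 2 R).const_add (3 : ℝ)
    exact h0.congr_deriv (by norm_num)
  have h2 := h.sqrt (by positivity)
  convert h2 using 1
  · rfl
  have hv := (v_pos R).ne'
  rw [show Real.sqrt (3 + R ^ 2) = v R from rfl]
  field_simp

/-- basic symbol term `c · Rᵐ · vⁿ · (v+R)ᵖ`. -/
def T (c : ℝ) (m : ℕ) (n p : ℤ) (R : ℝ) : ℝ := c * R ^ m * v R ^ n * (v R + R) ^ p

/-- formal derivative of a symbol term. -/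
def Td (c : ℝ) (m : ℕ) (n p : ℤ) : ℝ → ℝ := fun R =>
  T (c * m) (m - 1) n p R + T (c * n) (m + 1) (n - 2) p R + T (c * p) m (n - 1) p R

lemma T_hasDerivAt (c : ℝ) (m : ℕ) (n p : ℤ) (R : ℝ) :
    HasDerivAt (T c m n p) (Td c m n p R) R := by
  have hv := v_pos R
  have hw := v_add_pos R
  have h1 : HasDerivAt (fun R : ℝ => c * R ^ m) (c * (m * R ^ (m - 1))) R :=
    (hasDerivAt_pow m R).const_mul c
  have h2 : HasDerivAt (fun R => v R ^ n) ((n * v R ^ (n - 1)) * (R / v R)) R :=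
    (hasDerivAt_zpow n (v R) (Or.inl hv.ne')).comp R (v_hasDerivAt R)
  have hsum : HasDerivAt (fun x : ℝ => v x + x) (R / v R + 1) R := by
    exact (v_hasDerivAt R).add (hasDerivAt_id R)
  have h3 : HasDerivAt (fun R => (v R + R) ^ p) ((p * (v R + R) ^ (p - 1)) * (R / v R + 1)) R := by
    have h3' := HasDerivAt.comp (h₂ := fun y : ℝ => y ^ p) (h := fun x : ℝ => v x + x)
      R (hasDerivAt_zpow p (v R + R) (Or.inl hw.ne')) hsum
    exact h3'
  have h := (h1.mul h2).mul h3
  refine HasDerivAt.congr_deriv h ?_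
  unfold Td T
  rw [zpow_sub_one₀ hv.ne' n, zpow_sub_one₀ hw.ne' p,
    zpow_sub₀ hv.ne' n 2, zpow_two]
  field_simp
  simp only [Pi.mul_apply]
  ring

/-- symbol class of order `a`: sums of terms of total order `≤ a`. -/
inductive Sym : ℝ → (ℝ → ℝ) → Prop
  | term (a c : ℝ) (m : ℕ) (n p : ℤ) (h : c = 0 ∨ (m : ℝ) + n + p ≤ a) :
      Sym a (T c m n p)
  | add {f g : ℝ → ℝ} (a : ℝ) (hf : Sym a f) (hg : Sym a g) : Sym a fun R => f R + g R

lemma Sym.deriv' {a : ℝ} {f : ℝ → ℝ} (hf : Sym a f) :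
    ∃ g, Sym (a - 1) g ∧ ∀ R, HasDerivAt f (g R) R := by
  induction hf with
  | term a c m n p h =>
    refine ⟨Td c m n p, ?_, fun R => T_hasDerivAt c m n p R⟩
    have h1 : Sym (a - 1) (T (c * m) (m - 1) n p) := by
      refine Sym.term _ _ _ _ _ ?_
      rcases h with hc | h
      · exact Or.inl (by simp [hc])
      · rcases Nat.eq_zero_or_pos m with hm | hm
        · exact Or.inl (by simp [hm])
        · right
          rw [Nat.cast_sub hm]
          push_cast
          linarith
    have h2 : Sym (a - 1) (T (c * n) (m + 1) (n - 2) p) := by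
      refine Sym.term _ _ _ _ _ ?_
      rcases h with hc | h
      · exact Or.inl (by simp [hc])
      · right; push_cast; linarith
    have h3 : Sym (a - 1) (T (c * p) m (n - 1) p) := by
      refine Sym.term _ _ _ _ _ ?_
      rcases h with hc | h
      · exact Or.inl (by simp [hc])
      · right; push_cast; linarith
    exact Sym.add _ (Sym.add _ h1 h2) h3
  | add a hf hg ihf ihg =>
    obtain ⟨g1, hg1, hd1⟩ := ihf
    obtain ⟨g2, hg2, hd2⟩ := ihg
    exact ⟨fun R => g1 R + g2 R, Sym.add _ hg1 hg2, fun R => (hd1 R).add (hd2 R)⟩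

lemma Sym.iter {a : ℝ} {f : ℝ → ℝ} (hf : Sym a f) (k : ℕ) :
    ∃ g, Sym (a - k) g ∧ iteratedDeriv k f = g := by
  induction k with
  | zero => exact ⟨f, by simpa using hf, by simp⟩
  | succ k ih =>
    obtain ⟨g, hg, he⟩ := ih
    obtain ⟨g', hg', hd⟩ := hg.deriv'
    refine ⟨g', ?_, ?_⟩
    · have : a - ((k : ℝ) + 1) = a - k - 1 := by ring
      rw [show ((k + 1 : ℕ) : ℝ) = (k : ℝ) + 1 by push_cast; ring, this]
      exact hg'
    · rw [iteratedDeriv_succ, he]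
      funext R
      exact (hd R).deriv

lemma jap_one_le (R : ℝ) : 1 ≤ jap R := by
  have h1 := Real.sq_sqrt (show (0:ℝ) ≤ 1 + R ^ 2 by positivity)
  have h2 := Real.sqrt_nonneg (1 + R ^ 2)
  unfold jap
  nlinarith

lemma jap_sq (R : ℝ) : jap R ^ 2 = 1 + R ^ 2 := Real.sq_sqrt (by positivity)

lemma jap_pos (R : ℝ) : 0 < jap R := lt_of_lt_of_le one_pos (jap_one_le R)

lemma le_jap (R : ℝ) : R ≤ jap R := by nlinarith [jap_sq R, jap_pos R]

lemma jap_le_v (R : ℝ) : jap R ≤ v R := by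
  apply Real.sqrt_le_sqrt; nlinarith

lemma v_le (R : ℝ) : v R ≤ 2 * jap R := by
  nlinarith [v_sq R, jap_sq R, v_pos R, jap_pos R]

lemma zpow_bound {x y : ℝ} (hx : 1 ≤ x) (hxy : x ≤ y) (hyx : y ≤ 4 * x) (n : ℤ) :
    y ^ n ≤ 4 ^ n.natAbs * x ^ n := by
  have hx0 : 0 < x := lt_of_lt_of_le one_pos hx
  have hy0 : 0 < y := hx0.trans_le hxy
  rcases le_or_gt 0 n with hn | hn
  · lift n to ℕ using hn with k
    rw [Int.natAbs_natCast, zpow_natCast, zpow_natCast]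
    calc y ^ k ≤ (4 * x) ^ k := pow_le_pow_left₀ hy0.le hyx k
      _ = 4 ^ k * x ^ k := mul_pow 4 x k
  · obtain ⟨k, rfl⟩ : ∃ k : ℕ, n = -(k : ℤ) := ⟨n.natAbs, by omega⟩
    have h1 : y ^ (-(k : ℤ)) ≤ x ^ (-(k : ℤ)) := by
      rw [zpow_neg, zpow_neg, zpow_natCast, zpow_natCast]
      exact inv_anti₀ (by positivity) (pow_le_pow_left₀ hx0.le hxy k)
    have h2 : (1 : ℝ) ≤ 4 ^ (-(k : ℤ)).natAbs := one_le_pow₀ (by norm_num)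
    nlinarith [zpow_pos hx0 (-(k : ℤ))]

lemma Sym.bound {a : ℝ} {f : ℝ → ℝ} (hf : Sym a f) :
    ∃ C : ℝ, ∀ R, 0 ≤ R → |f R| ≤ C * jap R ^ a := by
  induction hf with
  | term a c m n p h =>
    rcases h with hc | h
    · exact ⟨0, fun R hR => by simp [T, hc]⟩
    · refine ⟨|c| * 4 ^ n.natAbs * 4 ^ p.natAbs, fun R hR => ?_⟩
      have hj1 := jap_one_le R
      have hj0 := jap_pos R
      have hv := v_pos R
      have hw := v_add_pos R
      have hjv := jap_le_v R
      have hv4 : v R ≤ 4 * jap R := by linarith [v_le R]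
      have hjw : jap R ≤ v R + R := by linarith
      have hw4 : v R + R ≤ 4 * jap R := by linarith [v_le R, le_jap R]
      have hb1 : R ^ m ≤ jap R ^ m := pow_le_pow_left₀ hR (le_jap R) m
      have hb2 := zpow_bound hj1 hjv hv4 n
      have hb3 := zpow_bound hj1 hjw hw4 p
      have habs : |T c m n p R| = |c| * (R ^ m * (v R ^ n * (v R + R) ^ p)) := by
        unfold T
        rw [abs_mul, abs_mul, abs_mul]
        rw [abs_of_nonneg (pow_nonneg hR m), abs_of_nonneg (le_of_lt (zpow_pos hv n)),
          abs_of_nonneg (le_of_lt (zpow_pos hw p))]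
        ring
      have hstep : R ^ m * (v R ^ n * (v R + R) ^ p) ≤
          jap R ^ m * ((4 ^ n.natAbs * jap R ^ n) * (4 ^ p.natAbs * jap R ^ p)) := by
        apply mul_le_mul hb1 (mul_le_mul hb2 hb3 (by positivity) (by positivity))
          (by positivity) (by positivity)
      have hcomb : jap R ^ m * (jap R ^ n * jap R ^ p) = jap R ^ ((m : ℤ) + n + p) := by
        rw [zpow_add₀ hj0.ne', zpow_add₀ hj0.ne', zpow_natCast]
        ring
      have hrp : jap R ^ ((m : ℤ) + n + p) ≤ jap R ^ a := by
        rw [← Real.rpow_intCast (jap R) ((m : ℤ) + n + p)]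
        apply Real.rpow_le_rpow_of_exponent_le hj1
        push_cast
        linarith
      calc |T c m n p R| = |c| * (R ^ m * (v R ^ n * (v R + R) ^ p)) := habs
        _ ≤ |c| * (jap R ^ m * ((4 ^ n.natAbs * jap R ^ n) * (4 ^ p.natAbs * jap R ^ p))) := by
            apply mul_le_mul_of_nonneg_left hstep (abs_nonneg c)
        _ = (|c| * 4 ^ n.natAbs * 4 ^ p.natAbs) * (jap R ^ m * (jap R ^ n * jap R ^ p)) := by
            ring
        _ = (|c| * 4 ^ n.natAbs * 4 ^ p.natAbs) * jap R ^ ((m : ℤ) + n + p) := by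
            rw [hcomb]
        _ ≤ (|c| * 4 ^ n.natAbs * 4 ^ p.natAbs) * jap R ^ a := by
            apply mul_le_mul_of_nonneg_left hrp (by positivity)
  | add a hf hg ihf ihg =>
    obtain ⟨C1, h1⟩ := ihf
    obtain ⟨C2, h2⟩ := ihg
    refine ⟨C1 + C2, fun R hR => ?_⟩
    refine le_trans (abs_add_le _ _) ?_
    have h3 := add_le_add (h1 R hR) (h2 R hR)
    linarith



lemma inv_v1 (R : ℝ) : (v R)⁻¹ = v R / (3 + R ^ 2) := by
  have hv := v_pos R
  have h3 : (0:ℝ) < 3 + R ^ 2 := by positivity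
  field_simp
  linear_combination -v_sq R

lemma inv_v3 (R : ℝ) : (v R ^ 3)⁻¹ = v R / (3 + R ^ 2) ^ 2 := by
  have hv := v_pos R
  have h3 : (0:ℝ) < 3 + R ^ 2 := by positivity
  field_simp
  linear_combination -(v R ^ 2 + 3 + R ^ 2) * v_sq R

lemma inv_v5 (R : ℝ) : (v R ^ 5)⁻¹ = v R / (3 + R ^ 2) ^ 3 := by
  have hv := v_pos R
  have h3 : (0:ℝ) < 3 + R ^ 2 := by positivity
  field_simp
  linear_combination -(v R ^ 4 + v R ^ 2 * (3 + R ^ 2) + (3 + R ^ 2) ^ 2) * v_sq R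

lemma inv_v7 (R : ℝ) : (v R ^ 7)⁻¹ = v R / (3 + R ^ 2) ^ 4 := by
  have hv := v_pos R
  have h3 : (0:ℝ) < 3 + R ^ 2 := by positivity
  field_simp
  linear_combination -(v R ^ 6 + v R ^ 4 * (3 + R ^ 2) + v R ^ 2 * (3 + R ^ 2) ^ 2
    + (3 + R ^ 2) ^ 3) * v_sq R

lemma inv_wR (R : ℝ) : (v R + R)⁻¹ = (v R - R) / 3 := by
  have hw := v_add_pos R
  field_simp
  linear_combination -v_sq R

lemma rpow_key (R : ℝ) :
    (1 + R ^ 2 / 3 : ℝ) ^ (-(3 : ℝ) / 2) = 3 * Real.sqrt 3 * (v R ^ 3)⁻¹ := by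
  have hw := v_pos R
  have h1 : (1 + R ^ 2 / 3 : ℝ) = v R ^ 2 / 3 := by rw [v_sq]; ring
  rw [h1, Real.div_rpow (by positivity) (by norm_num : (0:ℝ) ≤ 3)]
  rw [← Real.rpow_natCast (v R) 2, ← Real.rpow_mul hw.le]
  rw [show ((2:ℕ):ℝ) * (-(3:ℝ)/2) = -(3:ℝ) by norm_num]
  rw [Real.rpow_neg hw.le]
  have hv3 : v R ^ (3:ℝ) = v R ^ (3:ℕ) := by
    rw [show (3:ℝ) = ((3:ℕ):ℝ) by norm_num, Real.rpow_natCast]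
  rw [hv3]
  have h3 : (3:ℝ) ^ (-(3:ℝ)/2) = (3 * Real.sqrt 3)⁻¹ := by
    rw [show (-(3:ℝ)/2) = -((3:ℝ)/2) by ring, Real.rpow_neg (by norm_num : (0:ℝ) ≤ 3)]
    congr 1
    rw [show (3:ℝ)/2 = 1 + 1/2 by norm_num, Real.rpow_add (by norm_num : (0:ℝ) < 3),
      Real.rpow_one]
    rw [← Real.sqrt_eq_rpow]
  rw [h3]
  have hs : (0:ℝ) < Real.sqrt 3 := by positivity
  field_simp

lemma W4 (R : ℝ) : W R ^ 4 = 9 * (((3 : ℝ) + R ^ 2) ^ 2)⁻¹ := by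
  have h : (0:ℝ) < 1 + R ^ 2 / 3 := by positivity
  rw [W, inv_pow, show (4:ℕ) = 2*2 from rfl, pow_mul, Real.sq_sqrt h.le]
  rw [show ((1 + R ^ 2 / 3 : ℝ) ^ 2) = (3 + R ^ 2) ^ 2 / 9 by ring]
  rw [inv_div, div_eq_mul_inv]

lemma phi0_eq : phi0 = fun R =>
    T (3 * Real.sqrt 3) 1 (-3) 0 R + T (-Real.sqrt 3) 3 (-3) 0 R := by
  funext R
  simp only [phi0, rpow_key, T, zpow_neg, zpow_ofNat, zpow_zero]
  push_cast
  ring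

lemma theta0_eq : theta0 = fun R =>
    T (3 * Real.sqrt 3) 0 (-3) 0 R + T (-6 * Real.sqrt 3) 2 (-3) 0 R +
      T (Real.sqrt 3 / 3) 4 (-3) 0 R := by
  funext R
  simp only [theta0, rpow_key, T, zpow_neg, zpow_ofNat, zpow_zero]
  push_cast
  ring

def T2 (c : ℝ) (m : ℕ) (n p : ℤ) : ℝ → ℝ := fun R =>
  Td (c * m) (m - 1) n p R + Td (c * n) (m + 1) (n - 2) p R + Td (c * p) m (n - 1) p R

lemma Td_hasDerivAt (c : ℝ) (m : ℕ) (n p : ℤ) (R : ℝ) :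
    HasDerivAt (Td c m n p) (T2 c m n p R) R :=
  ((T_hasDerivAt _ _ _ _ R).add (T_hasDerivAt _ _ _ _ R)).add (T_hasDerivAt _ _ _ _ R)

def D1phi : ℝ → ℝ := fun R =>
  Td (3 * Real.sqrt 3) 1 (-3) 0 R + Td (-Real.sqrt 3) 3 (-3) 0 R

def D2phi : ℝ → ℝ := fun R =>
  T2 (3 * Real.sqrt 3) 1 (-3) 0 R + T2 (-Real.sqrt 3) 3 (-3) 0 R

def D1th : ℝ → ℝ := fun R =>
  Td (3 * Real.sqrt 3) 0 (-3) 0 R + Td (-6 * Real.sqrt 3) 2 (-3) 0 R +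
    Td (Real.sqrt 3 / 3) 4 (-3) 0 R

def D2th : ℝ → ℝ := fun R =>
  T2 (3 * Real.sqrt 3) 0 (-3) 0 R + T2 (-6 * Real.sqrt 3) 2 (-3) 0 R +
    T2 (Real.sqrt 3 / 3) 4 (-3) 0 R

lemma phi0_hasD (R : ℝ) : HasDerivAt phi0 (D1phi R) R := by
  rw [phi0_eq]
  exact (T_hasDerivAt _ _ _ _ R).add (T_hasDerivAt _ _ _ _ R)

lemma D1phi_hasD (R : ℝ) : HasDerivAt D1phi (D2phi R) R :=
  (Td_hasDerivAt _ _ _ _ R).add (Td_hasDerivAt _ _ _ _ R)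

lemma theta0_hasD (R : ℝ) : HasDerivAt theta0 (D1th R) R := by
  rw [theta0_eq]
  exact ((T_hasDerivAt _ _ _ _ R).add (T_hasDerivAt _ _ _ _ R)).add (T_hasDerivAt _ _ _ _ R)

lemma D1th_hasD (R : ℝ) : HasDerivAt D1th (D2th R) R :=
  ((Td_hasDerivAt _ _ _ _ R).add (Td_hasDerivAt _ _ _ _ R)).add (Td_hasDerivAt _ _ _ _ R)

lemma deriv_phi0 : deriv phi0 = D1phi := funext fun R => (phi0_hasD R).deriv

lemma deriv_D1phi : deriv D1phi = D2phi := funext fun R => (D1phi_hasD R).deriv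

lemma deriv_theta0 : deriv theta0 = D1th := funext fun R => (theta0_hasD R).deriv

lemma deriv_D1th : deriv D1th = D2th := funext fun R => (D1th_hasD R).deriv

lemma ode_phi (R : ℝ) : D2phi R + 5 * W R ^ 4 * phi0 R = 0 := by
  have hv := v_pos R
  have hw := v_add_pos R
  have h2 := v_sq R
  have h3 : (0:ℝ) < 3 + R ^ 2 := by positivity
  rw [W4, phi0_eq]
  simp only [D2phi, T2, Td, T, zpow_neg, zpow_ofNat, zpow_zero, zpow_one]
  push_cast
  norm_num
  rw [inv_v3 R, inv_v5 R, inv_v7 R]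
  field_simp
  ring

lemma ode_th (R : ℝ) : D2th R + 5 * W R ^ 4 * theta0 R = 0 := by
  have hv := v_pos R
  have hw := v_add_pos R
  have h2 := v_sq R
  have h3 : (0:ℝ) < 3 + R ^ 2 := by positivity
  rw [W4, theta0_eq]
  simp only [D2th, T2, Td, T, zpow_neg, zpow_ofNat, zpow_zero, zpow_one]
  push_cast
  norm_num
  rw [inv_v3 R, inv_v5 R, inv_v7 R]
  field_simp
  ring

lemma wronskian (R : ℝ) : theta0 R * D1phi R - D1th R * phi0 R = 1 := by
  have hv := v_pos R
  have hw := v_add_pos R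
  have h2 := v_sq R
  have hs : Real.sqrt 3 * Real.sqrt 3 = 3 := Real.mul_self_sqrt (by norm_num)
  rw [phi0_eq, theta0_eq]
  simp only [D1phi, D1th, Td, T, zpow_neg, zpow_ofNat, zpow_zero, zpow_one]
  push_cast
  norm_num
  rw [inv_v3 R, inv_v5 R]
  field_simp
  linear_combination (v R ^ 2 * (3 + R ^ 2) ^ 4) * hs + (3 * (3 + R ^ 2) ^ 4) * h2

lemma phi0_star_eq : (fun R' => phi0 R' + Real.sqrt 3) = (fun R =>
    T (3 * Real.sqrt 3) 1 (-3) 0 R + T (3 * Real.sqrt 3) 0 (-1) (-1) R +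
      T (3 * Real.sqrt 3) 1 (-2) (-1) R + T (3 * Real.sqrt 3) 2 (-3) (-1) R) := by
  funext R
  have hv := v_pos R
  have hw := v_add_pos R
  have h2 := v_sq R
  simp only [phi0, rpow_key, T, zpow_neg, zpow_ofNat, zpow_zero, zpow_one]
  push_cast
  norm_num
  rw [inv_v3 R, inv_v1 R, inv_wR R, v_sq R]
  field_simp
  linear_combination (-(3 + 2 * R ^ 2)) * h2

lemma theta0_star_eq : (fun R' => theta0 R' - R' / Real.sqrt 3) = (fun R =>
    T (3 * Real.sqrt 3) 0 (-3) 0 R + T (-6 * Real.sqrt 3) 2 (-3) 0 R +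
      T (-Real.sqrt 3) 1 (-1) (-1) R + T (-Real.sqrt 3) 2 (-2) (-1) R +
      T (-Real.sqrt 3) 3 (-3) (-1) R) := by
  funext R
  have hv := v_pos R
  have hw := v_add_pos R
  have h2 := v_sq R
  have hs : Real.sqrt 3 * Real.sqrt 3 = 3 := Real.mul_self_sqrt (by norm_num)
  have hs0 : Real.sqrt 3 ≠ 0 := by positivity
  simp only [theta0, rpow_key, T, zpow_neg, zpow_ofNat, zpow_zero, zpow_one]
  push_cast
  norm_num
  rw [inv_v3 R, inv_v1 R, inv_wR R, v_sq R]
  field_simp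
  linear_combination (9 * Real.sqrt 3 ^ 2 * (R * (3 + R ^ 2) + R ^ 3)) * h2 + (9 * R * (3 + R ^ 2) ^ 2) * hs

end ZEF

/-- `φ₀, θ₀` form a fundamental system of `f'' + 5W⁴f = 0` with Wronskian `1`, and
they have the asymptotic expansions `φ₀ = -√3 + O(⟨R⟩^{-2})`, `θ₀ = R/√3 + O(⟨R⟩^{-1})`
with symbol-type bounds for all derivatives. -/
theorem zero_energy_fundamental_system :
    (∀ R > (0 : ℝ), deriv (deriv phi0) R + 5 * W R ^ 4 * phi0 R = 0) ∧
    (∀ R > (0 : ℝ), deriv (deriv theta0) R + 5 * W R ^ 4 * theta0 R = 0) ∧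
    (∀ R ≥ (0 : ℝ), theta0 R * deriv phi0 R - deriv theta0 R * phi0 R = 1) ∧
    (∀ k : ℕ, ∃ C : ℝ, ∀ R ≥ (0 : ℝ),
      |iteratedDeriv k (fun R' => phi0 R' + Real.sqrt 3) R|
        ≤ C * jap R ^ (-(2 : ℝ) - (k : ℝ))) ∧
    (∀ k : ℕ, ∃ C : ℝ, ∀ R ≥ (0 : ℝ),
      |iteratedDeriv k (fun R' => theta0 R' - R' / Real.sqrt 3) R|
        ≤ C * jap R ^ (-(1 : ℝ) - (k : ℝ))) := by
  refine ⟨?_, ?_, ?_, ?_, ?_⟩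
  · intro R _
    rw [ZEF.deriv_phi0, ZEF.deriv_D1phi]
    exact ZEF.ode_phi R
  · intro R _
    rw [ZEF.deriv_theta0, ZEF.deriv_D1th]
    exact ZEF.ode_th R
  · intro R _
    rw [ZEF.deriv_phi0, ZEF.deriv_theta0]
    exact ZEF.wronskian R
  · intro k
    have hS : ZEF.Sym (-(2:ℝ)) (fun R =>
        ZEF.T (3 * Real.sqrt 3) 1 (-3) 0 R + ZEF.T (3 * Real.sqrt 3) 0 (-1) (-1) R +
          ZEF.T (3 * Real.sqrt 3) 1 (-2) (-1) R + ZEF.T (3 * Real.sqrt 3) 2 (-3) (-1) R) := by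
      refine ZEF.Sym.add _ (ZEF.Sym.add _ (ZEF.Sym.add _ (ZEF.Sym.term _ _ _ _ _ ?_)
        (ZEF.Sym.term _ _ _ _ _ ?_)) (ZEF.Sym.term _ _ _ _ _ ?_)) (ZEF.Sym.term _ _ _ _ _ ?_)
      · right; push_cast; norm_num
      · right; push_cast; norm_num
      · right; push_cast; norm_num
      · right; push_cast; norm_num
    obtain ⟨g, hg, hit⟩ := hS.iter k
    obtain ⟨C, hC⟩ := hg.bound
    refine ⟨C, fun R hR => ?_⟩
    rw [ZEF.phi0_star_eq, hit]
    exact hC R hR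
  · intro k
    have hS : ZEF.Sym (-(1:ℝ)) (fun R =>
        ZEF.T (3 * Real.sqrt 3) 0 (-3) 0 R + ZEF.T (-6 * Real.sqrt 3) 2 (-3) 0 R +
          ZEF.T (-Real.sqrt 3) 1 (-1) (-1) R + ZEF.T (-Real.sqrt 3) 2 (-2) (-1) R +
          ZEF.T (-Real.sqrt 3) 3 (-3) (-1) R) := by
      refine ZEF.Sym.add _ (ZEF.Sym.add _ (ZEF.Sym.add _ (ZEF.Sym.add _ (ZEF.Sym.term _ _ _ _ _ ?_)
        (ZEF.Sym.term _ _ _ _ _ ?_)) (ZEF.Sym.term _ _ _ _ _ ?_)) (ZEF.Sym.term _ _ _ _ _ ?_))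
        (ZEF.Sym.term _ _ _ _ _ ?_)
      · right; push_cast; norm_num
      · right; push_cast; norm_num
      · right; push_cast; norm_num
      · right; push_cast; norm_num
      · right; push_cast; norm_num
    obtain ⟨g, hg, hit⟩ := hS.iter k
    obtain ⟨C, hC⟩ := hg.bound
    refine ⟨C, fun R hR => ?_⟩
    rw [ZEF.theta0_star_eq, hit]
    exact hC R hR

end
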